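/- Let α,β,γ ∈ ℝ with αβ−γ²=1, and let Ā = αa²+βb²+2γab, B̄ = αac+βbd+γ(ad+bc), D̄ = αc²+βd²+2γcd in the Poisson algebra A^A_λ (the coordinate ring of SL(2,ℝ) with {a,b}=λab, {a,c}=λac, {a,d}=2λbc, {b,c}=0, {b,d}=λbd, {c,d}=λcd). Then {Ā,B̄} = 2λĀ(B̄−γ), {Ā,D̄} = 4λB̄(B̄−γ), {B̄,D̄} = 2λD̄(B̄−γ), i.e., the subalgebra generated by Ā,B̄,D̄ is Poisson-isomorphic to H^A_{λ,−γ}. -/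
import Mathlib

open MvPolynomial

noncomputable section

abbrev R4 : Type := MvPolynomial (Fin 4) ℝ

/-- The biderivation determined by the matrix `Pm` of brackets of generators. -/
def pb (Pm : Fin 4 → Fin 4 → R4) (f g : R4) : R4 :=
  ∑ i : Fin 4, ∑ j : Fin 4, Pm i j * pderiv i f * pderiv j g

def a : R4 := X 0
def b : R4 := X 1
def c : R4 := X 2
def d : R4 := X 3

/-- The A-type bracket matrix on `SL(2,ℝ)`. -/
def PA (lam : ℝ) : Fin 4 → Fin 4 → R4 :=
  ![ ![0, C lam * (a * b), C lam * (a * c), C (2*lam) * (b * c)],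
     ![-(C lam * (a * b)), 0, 0, C lam * (b * d)],
     ![-(C lam * (a * c)), 0, 0, C lam * (c * d)],
     ![-(C (2*lam) * (b * c)), -(C lam * (b * d)), -(C lam * (c * d)), 0] ]

/-- The defining relation of `SL(2,ℝ)`. -/
def rel : R4 := a * d - b * c - 1

lemma pderiv_two (i : Fin 4) : pderiv i (2 : R4) = 0 := by
  rw [show (2:R4) = C 2 by rw [map_ofNat]]; simp

lemma pdA0 (α β γ : ℝ) : pderiv 0 (C α * a^2 + C β * b^2 + C (2*γ) * (a*b))
    = C (2*α) * a + C (2*γ) * b := by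
  simp [a, b, pderiv_X, Pi.single_apply, map_ofNat, pderiv_two]; ring

lemma pdA1 (α β γ : ℝ) : pderiv 1 (C α * a^2 + C β * b^2 + C (2*γ) * (a*b))
    = C (2*β) * b + C (2*γ) * a := by
  simp [a, b, pderiv_X, Pi.single_apply, map_ofNat, pderiv_two]; ring

lemma pdA2 (α β γ : ℝ) : pderiv 2 (C α * a^2 + C β * b^2 + C (2*γ) * (a*b)) = 0 := by
  simp [a, b, pderiv_X, Pi.single_apply, map_ofNat, pderiv_two]

lemma pdA3 (α β γ : ℝ) : pderiv 3 (C α * a^2 + C β * b^2 + C (2*γ) * (a*b)) = 0 := by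
  simp [a, b, pderiv_X, Pi.single_apply, map_ofNat, pderiv_two]

lemma pdB0 (α β γ : ℝ) : pderiv 0 (C α * (a*c) + C β * (b*d) + C γ * (a*d + b*c))
    = C α * c + C γ * d := by
  simp [a, b, c, d, pderiv_X, Pi.single_apply, map_ofNat, pderiv_two]

lemma pdB1 (α β γ : ℝ) : pderiv 1 (C α * (a*c) + C β * (b*d) + C γ * (a*d + b*c))
    = C β * d + C γ * c := by
  simp [a, b, c, d, pderiv_X, Pi.single_apply, map_ofNat, pderiv_two]

lemma pdB2 (α β γ : ℝ) : pderiv 2 (C α * (a*c) + C β * (b*d) + C γ * (a*d + b*c))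
    = C α * a + C γ * b := by
  simp [a, b, c, d, pderiv_X, Pi.single_apply, map_ofNat, pderiv_two]

lemma pdB3 (α β γ : ℝ) : pderiv 3 (C α * (a*c) + C β * (b*d) + C γ * (a*d + b*c))
    = C β * b + C γ * a := by
  simp [a, b, c, d, pderiv_X, Pi.single_apply, map_ofNat, pderiv_two]

lemma pdD0 (α β γ : ℝ) : pderiv 0 (C α * c^2 + C β * d^2 + C (2*γ) * (c*d)) = 0 := by
  simp [c, d, pderiv_X, Pi.single_apply, map_ofNat, pderiv_two]

lemma pdD1 (α β γ : ℝ) : pderiv 1 (C α * c^2 + C β * d^2 + C (2*γ) * (c*d)) = 0 := by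
  simp [c, d, pderiv_X, Pi.single_apply, map_ofNat, pderiv_two]

lemma pdD2 (α β γ : ℝ) : pderiv 2 (C α * c^2 + C β * d^2 + C (2*γ) * (c*d))
    = C (2*α) * c + C (2*γ) * d := by
  simp [c, d, pderiv_X, Pi.single_apply, map_ofNat, pderiv_two]; ring

lemma pdD3 (α β γ : ℝ) : pderiv 3 (C α * c^2 + C β * d^2 + C (2*γ) * (c*d))
    = C (2*β) * d + C (2*γ) * c := by
  simp [c, d, pderiv_X, Pi.single_apply, map_ofNat, pderiv_two]; ring

theorem stmt_13 (lam α β γ : ℝ) (h : α * β - γ ^ 2 = 1) :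
    pb (PA lam) (C α * a^2 + C β * b^2 + C (2*γ) * (a*b))
        (C α * (a*c) + C β * (b*d) + C γ * (a*d + b*c)) -
      C (2*lam) * ((C α * a^2 + C β * b^2 + C (2*γ) * (a*b)) *
        ((C α * (a*c) + C β * (b*d) + C γ * (a*d + b*c)) - C γ)) ∈ Ideal.span {rel} ∧
    pb (PA lam) (C α * a^2 + C β * b^2 + C (2*γ) * (a*b))
        (C α * c^2 + C β * d^2 + C (2*γ) * (c*d)) -
      C (4*lam) * ((C α * (a*c) + C β * (b*d) + C γ * (a*d + b*c)) *
        ((C α * (a*c) + C β * (b*d) + C γ * (a*d + b*c)) - C γ)) ∈ Ideal.span {rel} ∧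
    pb (PA lam) (C α * (a*c) + C β * (b*d) + C γ * (a*d + b*c))
        (C α * c^2 + C β * d^2 + C (2*γ) * (c*d)) -
      C (2*lam) * ((C α * c^2 + C β * d^2 + C (2*γ) * (c*d)) *
        ((C α * (a*c) + C β * (b*d) + C γ * (a*d + b*c)) - C γ)) ∈ Ideal.span {rel} := by
  refine ⟨Ideal.mem_span_singleton.mpr
      ⟨-(C (2*lam*γ)) * (C α * a^2 + C β * b^2 + C (2*γ) * (a*b)), ?_⟩,
    Ideal.mem_span_singleton.mpr
      ⟨-(C (4*lam*γ)) * (C α * (a*c) + C β * (b*d) + C γ * (a*d + b*c)), ?_⟩,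
    Ideal.mem_span_singleton.mpr
      ⟨-(C (2*lam*γ)) * (C α * c^2 + C β * d^2 + C (2*γ) * (c*d)), ?_⟩⟩ <;>
  · simp only [pb, PA, Fin.sum_univ_four, Matrix.cons_val_zero, Matrix.cons_val_one,
      Matrix.head_cons, Matrix.cons_val_two, Matrix.tail_cons, Matrix.cons_val_three,
      pdA0, pdA1, pdA2, pdA3, pdB0, pdB1, pdB2, pdB3, pdD0, pdD1, pdD2, pdD3, rel]
    simp only [a, b, c, d, map_mul, map_ofNat]
    ring
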